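/- Posted-price upper bound under correlation: consider two agents with correlated values distributed as (v₁, v₂) = (1, 1) with probability 1/5, (2, 0) with probability 2/5, and (0, 2) with probability 2/5, and no feasibility constraint (any subset of agents may receive an item). Every sequential posted-price mechanism has expected revenue at most 8/5. -/

import Mathlib

/-!
Statement 16: with two agents whose correlated values are (1,1) w.p. 1/5,
(2,0) w.p. 2/5 and (0,2) w.p. 2/5, every sequential posted-price mechanism has
expected revenue at most 8/5.
-/

/-- Revenue of a sequential posted-price mechanism on two agents at the
valuation vector `v`: agent `first` is offered price `q1`; the other agent is
then offered `qacc` if the first accepted and `qrej` otherwise; each agent buys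
iff their value is at least the offered price, paying the price, and pays `0`
otherwise. -/
noncomputable def ppRevenue (first : Fin 2) (q1 qacc qrej : ℝ)
    (v : Fin 2 → ℝ) : ℝ :=
  let second : Fin 2 := if first = 0 then 1 else 0
  let pay1 : ℝ := if q1 ≤ v first then q1 else 0
  let price2 : ℝ := if q1 ≤ v first then qacc else qrej
  let pay2 : ℝ := if price2 ≤ v second then price2 else 0
  pay1 + pay2

set_option maxHeartbeats 1000000 in
/-- Every sequential posted-price mechanism extracts expected revenue at most
`8/5` from the correlated distribution putting mass `1/5` on values `(1,1)`,
`2/5` on `(2,0)` and `2/5` on `(0,2)`. -/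
theorem postedPrice_revenue_le (first : Fin 2) (q1 qacc qrej : ℝ)
    (hq1 : 0 ≤ q1) (hqacc : 0 ≤ qacc) (hqrej : 0 ≤ qrej) :
    (1 / 5) * ppRevenue first q1 qacc qrej ![1, 1]
      + (2 / 5) * ppRevenue first q1 qacc qrej ![2, 0]
      + (2 / 5) * ppRevenue first q1 qacc qrej ![0, 2] ≤ 8 / 5 := by
  fin_cases first <;>
  · simp only [ppRevenue]
    norm_num [Matrix.cons_val_zero, Matrix.cons_val_one, Matrix.head_cons]
    by_cases h1 : q1 ≤ 0 <;> by_cases h2 : q1 ≤ 1 <;> by_cases h3 : q1 ≤ 2 <;> simp only [h1, h2, h3, if_true, if_false] <;> split_ifs <;> linarith
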